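/- Let A and B be dendriform algebras and A⁺ = k ⊕ A, B⁺ = k ⊕ B their unitizations (with a≺1=a, 1≻a=a, 1≺a=a≻1=0). On A ⊠ B := (A⊗k) ⊕ (k⊗B) ⊕ (A⊗B) ⊆ A⁺⊗B⁺ define, whenever at least one of b, b' lies in B, (a⊗b) ≺ (a'⊗b') := (a⋆a') ⊗ (b≺b') and (a⊗b) ≻ (a'⊗b') := (a⋆a') ⊗ (b≻b'), and (a⊗1) ≺ (a'⊗1) := (a≺a')⊗1, (a⊗1) ≻ (a'⊗1) := (a≻a')⊗1, where ⋆ is the associative product of A⁺. Then A ⊠ B is a dendriform algebra. -/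

import Mathlib

open TensorProduct LinearMap

noncomputable section

variable (k : Type*) [Field k] [CharZero k]
variable (A : Type*) [AddCommGroup A] [Module k A]
variable (B : Type*) [AddCommGroup B] [Module k B]

/-- The operation `≺` on `A ⊠ B = (A⊗k) ⊕ (k⊗B) ⊕ (A⊗B)`, realized on
`A × B × (A ⊗ B)` (the three summands `a⊗1`, `1⊗b`, `a⊗b`).  It is the
bilinear extension of `(a⊗b) ≺ (a'⊗b') := (a ⋆ a') ⊗ (b ≺ b')` (when at least
one of `b, b'` lies in `B`) and `(a⊗1) ≺ (a'⊗1) := (a ≺ a') ⊗ 1`, where `⋆` is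
the unital associative product of `A⁺` and the unitization conventions
`b ≺ 1 = b`, `1 ≺ b = 0` are used in `B⁺`. -/
def boxPrec (pA sA' : A →ₗ[k] A →ₗ[k] A) (pB : B →ₗ[k] B →ₗ[k] B)
    (x y : A × B × (A ⊗[k] B)) : A × B × (A ⊗[k] B) :=
  (pA x.1 y.1, pB x.2.1 y.2.1,
    y.1 ⊗ₜ[k] x.2.1
      + lTensor A (pB x.2.1) y.2.2
      + rTensor B ((pA + sA').flip y.1) x.2.2
      + lTensor A (pB.flip y.2.1) x.2.2
      + (TensorProduct.map (TensorProduct.lift (pA + sA')) (TensorProduct.lift pB))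
          ((TensorProduct.tensorTensorTensorComm k A B A B) (x.2.2 ⊗ₜ[k] y.2.2)))

/-- The operation `≻` on `A ⊠ B`, the bilinear extension of
`(a⊗b) ≻ (a'⊗b') := (a ⋆ a') ⊗ (b ≻ b')` (when at least one of `b, b'` lies in
`B`) and `(a⊗1) ≻ (a'⊗1) := (a ≻ a') ⊗ 1`, with the conventions `1 ≻ b = b`,
`b ≻ 1 = 0` in `B⁺`. -/
def boxSucc (pA sA' : A →ₗ[k] A →ₗ[k] A) (sB : B →ₗ[k] B →ₗ[k] B)
    (x y : A × B × (A ⊗[k] B)) : A × B × (A ⊗[k] B) :=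
  (sA' x.1 y.1, sB x.2.1 y.2.1,
    x.1 ⊗ₜ[k] y.2.1
      + rTensor B ((pA + sA') x.1) y.2.2
      + lTensor A (sB x.2.1) y.2.2
      + lTensor A (sB.flip y.2.1) x.2.2
      + (TensorProduct.map (TensorProduct.lift (pA + sA')) (TensorProduct.lift sB))
          ((TensorProduct.tensorTensorTensorComm k A B A B) (x.2.2 ⊗ₜ[k] y.2.2)))

variable {k A B}
variable (pA sA' : A →ₗ[k] A →ₗ[k] A) (pB sB : B →ₗ[k] B →ₗ[k] B)

omit [CharZero k] in
lemma boxPrec_add_left (u v y : A × B × (A ⊗[k] B)) :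
    boxPrec k A B pA sA' pB (u + v) y
      = boxPrec k A B pA sA' pB u y + boxPrec k A B pA sA' pB v y := by
  simp only [boxPrec, Prod.fst_add, Prod.snd_add, map_add, LinearMap.add_apply, add_tmul, tmul_add,
    LinearMap.rTensor_add, LinearMap.lTensor_add, Prod.mk_add_mk, Prod.mk.injEq]
  refine ⟨trivial, trivial, ?_⟩
  abel

omit [CharZero k] in
lemma boxPrec_add_right (x u v : A × B × (A ⊗[k] B)) :
    boxPrec k A B pA sA' pB x (u + v)
      = boxPrec k A B pA sA' pB x u + boxPrec k A B pA sA' pB x v := by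
  simp only [boxPrec, Prod.fst_add, Prod.snd_add, map_add, LinearMap.add_apply, add_tmul, tmul_add,
    LinearMap.rTensor_add, LinearMap.lTensor_add, Prod.mk_add_mk, Prod.mk.injEq]
  refine ⟨trivial, trivial, ?_⟩
  abel

omit [CharZero k] in
lemma boxSucc_add_left (u v y : A × B × (A ⊗[k] B)) :
    boxSucc k A B pA sA' sB (u + v) y
      = boxSucc k A B pA sA' sB u y + boxSucc k A B pA sA' sB v y := by
  simp only [boxSucc, Prod.fst_add, Prod.snd_add, map_add, LinearMap.add_apply, add_tmul, tmul_add,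
    LinearMap.rTensor_add, LinearMap.lTensor_add, Prod.mk_add_mk, Prod.mk.injEq]
  refine ⟨trivial, trivial, ?_⟩
  abel

omit [CharZero k] in
lemma boxSucc_add_right (x u v : A × B × (A ⊗[k] B)) :
    boxSucc k A B pA sA' sB x (u + v)
      = boxSucc k A B pA sA' sB x u + boxSucc k A B pA sA' sB x v := by
  simp only [boxSucc, Prod.fst_add, Prod.snd_add, map_add, LinearMap.add_apply, add_tmul, tmul_add,
    LinearMap.rTensor_add, LinearMap.lTensor_add, Prod.mk_add_mk, Prod.mk.injEq]
  refine ⟨trivial, trivial, ?_⟩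
  abel

omit [CharZero k] in
lemma boxPrec_zero_left (y : A × B × (A ⊗[k] B)) :
    boxPrec k A B pA sA' pB 0 y = 0 := by
  simp [boxPrec, Prod.ext_iff]

omit [CharZero k] in
lemma boxPrec_zero_right (x : A × B × (A ⊗[k] B)) :
    boxPrec k A B pA sA' pB x 0 = 0 := by
  simp [boxPrec, Prod.ext_iff]

omit [CharZero k] in
lemma boxSucc_zero_left (y : A × B × (A ⊗[k] B)) :
    boxSucc k A B pA sA' sB 0 y = 0 := by
  simp [boxSucc, Prod.ext_iff]

omit [CharZero k] in
lemma boxSucc_zero_right (x : A × B × (A ⊗[k] B)) :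
    boxSucc k A B pA sA' sB x 0 = 0 := by
  simp [boxSucc, Prod.ext_iff]

omit [CharZero k] in
lemma my_induction {P : A × B × (A ⊗[k] B) → Prop}
    (hadd : ∀ u v, P u → P v → P (u + v)) (h0 : P 0)
    (h1 : ∀ a : A, P (a, 0, 0)) (h2 : ∀ b : B, P (0, b, 0))
    (h3 : ∀ (a : A) (b : B), P (0, 0, a ⊗ₜ[k] b)) : ∀ x, P x := by
  have h3' : ∀ t : A ⊗[k] B, P (0, 0, t) := by
    intro t
    induction t using TensorProduct.induction_on with
    | zero => exact h0
    | tmul a b => exact h3 a b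
    | add s t hs ht =>
        have h : ((0, 0, s + t) : A × B × (A ⊗[k] B)) = (0, 0, s) + (0, 0, t) := by
          simp [Prod.ext_iff]
        rw [h]; exact hadd _ _ hs ht
  rintro ⟨a, b, t⟩
  have h : (a, b, t) = ((a, 0, 0) : A × B × (A ⊗[k] B)) + (0, b, 0) + (0, 0, t) := by
    simp [Prod.ext_iff]
  rw [h]
  exact hadd _ _ (hadd _ _ (h1 a) (h2 b)) (h3' t)

/-- generators of `A ⊠ B` -/
def boxGen (x : A × B × (A ⊗[k] B)) : Prop :=
  (∃ a, x = (a, 0, 0)) ∨ (∃ b, x = (0, b, 0)) ∨ ∃ a b, x = (0, 0, a ⊗ₜ[k] b)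

omit [CharZero k] in
lemma my_induction₃ {P : (A × B × (A ⊗[k] B)) → (A × B × (A ⊗[k] B)) → (A × B × (A ⊗[k] B)) → Prop}
    (haddx : ∀ y z u v, P u y z → P v y z → P (u + v) y z)
    (haddy : ∀ x z u v, P x u z → P x v z → P x (u + v) z)
    (haddz : ∀ x y u v, P x y u → P x y v → P x y (u + v))
    (h0x : ∀ y z, P 0 y z) (h0y : ∀ x z, P x 0 z) (h0z : ∀ x y, P x y 0)
    (base : ∀ x y z, boxGen x → boxGen y → boxGen z → P x y z) :
    ∀ x y z, P x y z := by
  have keyz : ∀ x y, boxGen x → boxGen y → ∀ z, P x y z := fun x y hx hy =>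
    my_induction (fun u v hu hv => haddz x y u v hu hv) (h0z x y)
      (fun a => base x y _ hx hy (Or.inl ⟨a, rfl⟩))
      (fun b => base x y _ hx hy (Or.inr (Or.inl ⟨b, rfl⟩)))
      (fun a b => base x y _ hx hy (Or.inr (Or.inr ⟨a, b, rfl⟩)))
  have keyy : ∀ x, boxGen x → ∀ y z, P x y z := fun x hx =>
    my_induction (P := fun y => ∀ z, P x y z)
      (fun u v hu hv z => haddy x z u v (hu z) (hv z))
      (fun z => h0y x z)
      (fun a => keyz x _ hx (Or.inl ⟨a, rfl⟩))
      (fun b => keyz x _ hx (Or.inr (Or.inl ⟨b, rfl⟩)))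
      (fun a b => keyz x _ hx (Or.inr (Or.inr ⟨a, b, rfl⟩)))
  exact my_induction (P := fun x => ∀ y z, P x y z)
    (fun u v hu hv y z => haddx y z u v (hu y z) (hv y z))
    (fun y z => h0x y z)
    (fun a => keyy _ (Or.inl ⟨a, rfl⟩))
    (fun b => keyy _ (Or.inr (Or.inl ⟨b, rfl⟩)))
    (fun a b => keyy _ (Or.inr (Or.inr ⟨a, b, rfl⟩)))

variable (k A B)

set_option maxHeartbeats 1000000 in
/-- Let `A` and `B` be dendriform algebras (operations
`pA = ≺_A, sA' = ≻_A` and `pB = ≺_B, sB = ≻_B`).  Then `A ⊠ B`, with the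
operations `≺, ≻` defined via the coherent unit action
(`(a⊗b) ≺ (a'⊗b') = (a⋆a')⊗(b≺b')`, `(a⊗b) ≻ (a'⊗b') = (a⋆a')⊗(b≻b')`, and
`(a⊗1)≺(a'⊗1) = (a≺a')⊗1`, `(a⊗1)≻(a'⊗1) = (a≻a')⊗1`), is a dendriform
algebra. -/
theorem box_dendriform
    (pA sA' : A →ₗ[k] A →ₗ[k] A) (pB sB : B →ₗ[k] B →ₗ[k] B)
    (hA1 : ∀ a b c : A, pA (pA a b) c = pA a (pA b c + sA' b c))
    (hA2 : ∀ a b c : A, pA (sA' a b) c = sA' a (pA b c))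
    (hA3 : ∀ a b c : A, sA' a (sA' b c) = sA' (pA a b + sA' a b) c)
    (hB1 : ∀ a b c : B, pB (pB a b) c = pB a (pB b c + sB b c))
    (hB2 : ∀ a b c : B, pB (sB a b) c = sB a (pB b c))
    (hB3 : ∀ a b c : B, sB a (sB b c) = sB (pB a b + sB a b) c) :
    ∀ x y z : A × B × (A ⊗[k] B),
      boxPrec k A B pA sA' pB (boxPrec k A B pA sA' pB x y) z
        = boxPrec k A B pA sA' pB x
            (boxPrec k A B pA sA' pB y z + boxSucc k A B pA sA' sB y z) ∧
      boxPrec k A B pA sA' pB (boxSucc k A B pA sA' sB x y) z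
        = boxSucc k A B pA sA' sB x (boxPrec k A B pA sA' pB y z) ∧
      boxSucc k A B pA sA' sB x (boxSucc k A B pA sA' sB y z)
        = boxSucc k A B pA sA' sB
            (boxPrec k A B pA sA' pB x y + boxSucc k A B pA sA' sB x y) z := by
  have E1 : ∀ x y z : A × B × (A ⊗[k] B),
      boxPrec k A B pA sA' pB (boxPrec k A B pA sA' pB x y) z
        = boxPrec k A B pA sA' pB x
            (boxPrec k A B pA sA' pB y z + boxSucc k A B pA sA' sB y z) := by
    refine my_induction₃ ?_ ?_ ?_ ?_ ?_ ?_ ?_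
    · intro y z u v hu hv
      simp only [boxPrec_add_left, hu, hv]
    · intro x z u v hu hv
      simp only [boxPrec_add_left, boxPrec_add_right, boxSucc_add_left, boxSucc_add_right, hu, hv]
      abel
    · intro x y u v hu hv
      simp only [boxPrec_add_left, boxPrec_add_right, boxSucc_add_left, boxSucc_add_right, hu, hv]
      abel
    · intro y z
      simp [boxPrec_zero_left]
    · intro x z
      simp [boxPrec_zero_left, boxPrec_zero_right, boxSucc_zero_left]
    · intro x y
      simp [boxPrec_zero_right, boxSucc_zero_right]
    · rintro x y z (⟨a,rfl⟩|⟨b,rfl⟩|⟨a,b,rfl⟩) (⟨a',rfl⟩|⟨b',rfl⟩|⟨a',b',rfl⟩)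
        (⟨a'',rfl⟩|⟨b'',rfl⟩|⟨a'',b'',rfl⟩) <;>
      simp [boxPrec, boxSucc, Prod.ext_iff, hA1, hA2, hA3, hB1, hB2, hB3, tmul_add, add_tmul,
        LinearMap.add_apply, flip_apply, TensorProduct.lift.tmul, TensorProduct.map_tmul,
        tensorTensorTensorComm_tmul, map_add] <;>
      abel
  have E2 : ∀ x y z : A × B × (A ⊗[k] B),
      boxPrec k A B pA sA' pB (boxSucc k A B pA sA' sB x y) z
        = boxSucc k A B pA sA' sB x (boxPrec k A B pA sA' pB y z) := by
    refine my_induction₃ ?_ ?_ ?_ ?_ ?_ ?_ ?_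
    · intro y z u v hu hv
      simp only [boxPrec_add_left, boxSucc_add_left, hu, hv]
    · intro x z u v hu hv
      simp only [boxPrec_add_left, boxPrec_add_right, boxSucc_add_left, boxSucc_add_right, hu, hv]
    · intro x y u v hu hv
      simp only [boxPrec_add_left, boxPrec_add_right, boxSucc_add_left, boxSucc_add_right, hu, hv]
    · intro y z
      simp [boxPrec_zero_left, boxSucc_zero_left]
    · intro x z
      simp [boxPrec_zero_left, boxPrec_zero_right, boxSucc_zero_right]
    · intro x y
      simp [boxPrec_zero_right, boxSucc_zero_right]
    · rintro x y z (⟨a,rfl⟩|⟨b,rfl⟩|⟨a,b,rfl⟩) (⟨a',rfl⟩|⟨b',rfl⟩|⟨a',b',rfl⟩)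
        (⟨a'',rfl⟩|⟨b'',rfl⟩|⟨a'',b'',rfl⟩) <;>
      simp [boxPrec, boxSucc, Prod.ext_iff, hA1, hA2, hA3, hB1, hB2, hB3, tmul_add, add_tmul,
        LinearMap.add_apply, flip_apply, TensorProduct.lift.tmul, TensorProduct.map_tmul,
        tensorTensorTensorComm_tmul, map_add] <;>
      abel
  have E3 : ∀ x y z : A × B × (A ⊗[k] B),
      boxSucc k A B pA sA' sB x (boxSucc k A B pA sA' sB y z)
        = boxSucc k A B pA sA' sB
            (boxPrec k A B pA sA' pB x y + boxSucc k A B pA sA' sB x y) z := by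
    refine my_induction₃ ?_ ?_ ?_ ?_ ?_ ?_ ?_
    · intro y z u v hu hv
      simp only [boxPrec_add_left, boxSucc_add_left, hu, hv]
      abel
    · intro x z u v hu hv
      simp only [boxPrec_add_left, boxPrec_add_right, boxSucc_add_left, boxSucc_add_right, hu, hv]
      abel
    · intro x y u v hu hv
      simp only [boxPrec_add_left, boxPrec_add_right, boxSucc_add_left, boxSucc_add_right, hu, hv]
    · intro y z
      simp [boxSucc_zero_left, boxPrec_zero_left]
    · intro x z
      simp [boxSucc_zero_left, boxSucc_zero_right, boxPrec_zero_right]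
    · intro x y
      simp [boxSucc_zero_right, boxPrec_zero_right]
    · rintro x y z (⟨a,rfl⟩|⟨b,rfl⟩|⟨a,b,rfl⟩) (⟨a',rfl⟩|⟨b',rfl⟩|⟨a',b',rfl⟩)
        (⟨a'',rfl⟩|⟨b'',rfl⟩|⟨a'',b'',rfl⟩) <;>
      simp [boxPrec, boxSucc, Prod.ext_iff, hA1, hA2, hA3, hB1, hB2, hB3, tmul_add, add_tmul,
        LinearMap.add_apply, flip_apply, TensorProduct.lift.tmul, TensorProduct.map_tmul,
        tensorTensorTensorComm_tmul, map_add] <;>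
      abel
  exact fun x y z => ⟨E1 x y z, E2 x y z, E3 x y z⟩

end
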